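/- If (μ_n)_{n≥0} is a sequence of positive reals decreasing monotonically to 0 and limsup_{n→∞} n·μ_n > 0, then for every bijection φ: ℕ → ℕ there exists a set M ⊆ ℕ such that the sum over n ∈ M of min{ μ_{φ(m)} : m ∈ M, m ≤ n } is infinite. -/

import Mathlib

open Filter

/-- Lemma 2.6: if `μ` is a positive sequence decreasing to `0` with
`limsup n·μ_n > 0`, then for every permutation `φ` of `ℕ` there is a set `M ⊆ ℕ`
such that `∑_{n ∈ M} min{μ_{φ(m)} : m ∈ M, m ≤ n} = ∞`. -/
theorem interpolation_percolation_lemma_impl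
    (μ : ℕ → ℝ) (hpos : ∀ n, 0 < μ n) (hmono : Antitone μ)
    (hlim : Tendsto μ atTop (nhds 0))
    (hsup : 0 < limsup (fun n : ℕ => (n : ℝ) * μ n) atTop) :
    ∀ φ : ℕ ≃ ℕ, ∃ M : Set ℕ,
      ¬ Summable (fun n : M => sInf ((fun m => μ (φ m)) '' {m ∈ M | m ≤ (n : ℕ)})) := by
  intro φ
  classical
  obtain ⟨c, hc0, hg⟩ : ∃ c : ℝ, 0 < c ∧ ∀ N : ℕ, ∃ n, N ≤ n ∧ c < (n : ℝ) * μ n := by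
    have hcob : IsCoboundedUnder (· ≤ ·) atTop (fun n : ℕ => (n : ℝ) * μ n) :=
      IsCoboundedUnder.of_frequently_ge (a := 0)
        (Frequently.of_forall fun n => mul_nonneg (Nat.cast_nonneg n) (hpos n).le)
    have hfreq := frequently_lt_of_lt_limsup hcob (half_lt_self hsup)
    refine ⟨_, half_pos hsup, fun N => ?_⟩
    obtain ⟨n, hn, h⟩ := (frequently_atTop.mp hfreq) N
    exact ⟨n, hn, h⟩
  choose g hg1 hg2 using hg
  set Bset : ℕ → ℕ → Finset ℕ :=
    fun n P => ((Finset.range (n + 1)).image φ.symm).filter (fun m => P ≤ m) with hBsetdef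
  set step : ℕ × ℕ → ℕ × ℕ :=
    fun q => (g (2 * ((Bset q.1 q.2).sup id + 1) + q.1 + 1), (Bset q.1 q.2).sup id + 1)
    with hstepdef
  set F : ℕ → ℕ × ℕ := fun k => step^[k] (g 1, 0) with hFdef
  set nk : ℕ → ℕ := fun k => (F k).1 with hnkdef
  set Pk : ℕ → ℕ := fun k => (F k).2 with hPkdef
  set B : ℕ → Finset ℕ := fun k => Bset (nk k) (Pk k) with hBdef
  have hFsucc : ∀ k, F (k + 1) = step (F k) := fun k =>
    Function.iterate_succ_apply' step k _
  have hnk0 : nk 0 = g 1 := rfl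
  have hPk0 : Pk 0 = 0 := rfl
  have hnksucc : ∀ k, nk (k + 1) = g (2 * ((B k).sup id + 1) + nk k + 1) := by
    intro k; simp only [hnkdef, hFsucc k, hstepdef]; rfl
  have hPksucc : ∀ k, Pk (k + 1) = (B k).sup id + 1 := by
    intro k; simp only [hPkdef, hFsucc k, hstepdef]; rfl
  -- basic spec of nk
  have hnspec : ∀ k, c < (nk k : ℝ) * μ (nk k) := by
    intro k
    cases k with
    | zero => rw [hnk0]; exact hg2 1
    | succ k => rw [hnksucc k]; exact hg2 _
  have hnkpos : ∀ k, 0 < nk k := by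
    intro k
    by_contra h
    have h0 : nk k = 0 := by omega
    have h2 := hnspec k
    rw [h0] at h2
    simp at h2
    linarith
  have hn2P : ∀ k, 2 * Pk k ≤ nk k := by
    intro k
    cases k with
    | zero => simp [hPk0]
    | succ k =>
      rw [hnksucc k, hPksucc k]
      have := hg1 (2 * ((B k).sup id + 1) + nk k + 1)
      omega
  have hnklt : ∀ k, nk k < nk (k + 1) := by
    intro k
    rw [hnksucc k]
    have := hg1 (2 * ((B k).sup id + 1) + nk k + 1)
    omega
  have hnkmono : Monotone nk := monotone_nat_of_le_succ (fun k => (hnklt k).le)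
  -- membership in blocks
  have hBmem : ∀ k m, m ∈ B k ↔ φ m ≤ nk k ∧ Pk k ≤ m := by
    intro k m
    simp only [hBdef, hBsetdef, Finset.mem_filter, Finset.mem_image, Finset.mem_range,
      Nat.lt_succ_iff]
    constructor
    · rintro ⟨⟨x, hx, rfl⟩, h2⟩
      simpa [hx] using And.intro hx h2
    · rintro ⟨h1, h2⟩
      exact ⟨⟨φ m, h1, by simp⟩, h2⟩
  -- cardinality bound
  have hcard : ∀ k, nk k + 1 - Pk k ≤ (B k).card := by
    intro k
    have h1 : ((Finset.range (nk k + 1)).image φ.symm).card = nk k + 1 := by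
      rw [Finset.card_image_of_injective _ (Equiv.injective _), Finset.card_range]
    have h2 := Finset.card_filter_add_card_filter_not
      (s := (Finset.range (nk k + 1)).image φ.symm) (p := fun m => Pk k ≤ m)
    have h3 : ((Finset.range (nk k + 1)).image φ.symm).filter (fun m => ¬ Pk k ≤ m)
        ⊆ Finset.range (Pk k) := by
      intro m hm
      rw [Finset.mem_filter] at hm
      rw [Finset.mem_range]
      omega
    have h4 := Finset.card_le_card h3
    rw [Finset.card_range] at h4
    have : (B k).card = (((Finset.range (nk k + 1)).image φ.symm).filter
        (fun m => Pk k ≤ m)).card := rfl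
    omega
  have hBne : ∀ k, (B k).Nonempty := by
    intro k
    rw [← Finset.card_pos]
    have := hcard k
    have := hn2P k
    omega
  -- blocks lie below the next threshold
  have hBlt : ∀ k m, m ∈ B k → m < Pk (k + 1) := by
    intro k m hm
    rw [hPksucc k]
    have := Finset.le_sup (f := id) hm
    simpa using Nat.lt_succ_of_le this
  have hPmono : Monotone Pk := by
    apply monotone_nat_of_le_succ
    intro k
    obtain ⟨m, hm⟩ := hBne k
    have h1 := ((hBmem k m).mp hm).2
    have h2 := hBlt k m hm
    omega
  -- the set M
  set M : Set ℕ := {m | ∃ k, m ∈ B k} with hMdef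
  refine ⟨M, ?_⟩
  intro hS
  set f : M → ℝ := fun n => sInf ((fun m => μ (φ m)) '' {m ∈ M | m ≤ (n : ℕ)}) with hfdef
  have hself : ∀ x : M, μ (φ (x : ℕ)) ∈ (fun m => μ (φ m)) '' {m ∈ M | m ≤ (x : ℕ)} := by
    intro x
    exact ⟨(x : ℕ), ⟨x.2, le_refl _⟩, rfl⟩
  have hf0 : ∀ x : M, 0 ≤ f x := by
    intro x
    apply le_csInf ⟨_, hself x⟩
    rintro b ⟨m, _, rfl⟩
    exact (hpos _).le
  -- key pointwise bound
  have hkey : ∀ k (n : ℕ) (hn : n ∈ B k), μ (nk k) ≤ f ⟨n, k, hn⟩ := by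
    intro k n hn
    apply le_csInf ⟨_, hself ⟨n, k, hn⟩⟩
    rintro b ⟨m, ⟨⟨j, hj⟩, hmn⟩, rfl⟩
    have hmn' : m ≤ n := hmn
    have hjk : nk j ≤ nk k := by
      rcases le_or_gt j k with h | h
      · exact hnkmono h
      · exfalso
        have h1 : Pk (k + 1) ≤ Pk j := hPmono h
        have h2 := ((hBmem j m).mp hj).2
        have h3 := hBlt k n hn
        omega
    calc μ (nk k) ≤ μ (nk j) := hmono hjk
      _ ≤ μ (φ m) := hmono ((hBmem j m).mp hj).1
  -- blocks as finsets of M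
  set T : ℕ → Finset M := fun k => (B k).attach.map
    ⟨fun x => (⟨x.1, k, x.2⟩ : M), by intro a b h; have h' := congrArg (fun y : ↥M => (y : ℕ)) h; exact Subtype.ext h'⟩
    with hTdef
  have hTsum : ∀ k, c / 2 ≤ ∑ x ∈ T k, f x := by
    intro k
    rw [hTdef]
    simp only [Finset.sum_map, Function.Embedding.coeFn_mk]
    have h1 : ((B k).card : ℝ) * μ (nk k) ≤ ∑ x ∈ (B k).attach, f ⟨x.1, k, x.2⟩ := by
      have := Finset.card_nsmul_le_sum (B k).attach
        (fun x => f ⟨x.1, k, x.2⟩) (μ (nk k)) (fun x _ => hkey k x.1 x.2)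
      simpa [nsmul_eq_mul] using this
    refine le_trans ?_ h1
    have hcardk := hcard k
    have h2P := hn2P k
    have hμpos := hpos (nk k)
    have hnpos := hnkpos k
    have hcR : ((nk k : ℝ) / 2) ≤ ((B k).card : ℝ) := by
      have : (nk k + 1 - Pk k : ℕ) ≤ (B k).card := hcardk
      have hc' : ((nk k + 1 - Pk k : ℕ) : ℝ) ≤ ((B k).card : ℝ) := by exact_mod_cast this
      have hPle : (Pk k : ℝ) ≤ (nk k : ℝ) / 2 := by
        have : (2 * Pk k : ℕ) ≤ nk k := h2P
        have : ((2 * Pk k : ℕ) : ℝ) ≤ (nk k : ℝ) := by exact_mod_cast this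
        push_cast at this
        linarith
      have heq : ((nk k + 1 - Pk k : ℕ) : ℝ) = (nk k : ℝ) + 1 - (Pk k : ℝ) := by
        have : Pk k ≤ nk k + 1 := by omega
        push_cast [Nat.cast_sub this]
        ring
      rw [heq] at hc'
      linarith
    have hspec := hnspec k
    have hnR : (0 : ℝ) < (nk k : ℝ) := by exact_mod_cast hnpos
    calc c / 2 ≤ ((nk k : ℝ) * μ (nk k)) / 2 := by linarith
      _ = ((nk k : ℝ) / 2) * μ (nk k) := by ring
      _ ≤ ((B k).card : ℝ) * μ (nk k) := by
          exact mul_le_mul_of_nonneg_right hcR hμpos.le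
  -- disjointness of the T k
  have hBdisj : ∀ j k, j < k → Disjoint (B j) (B k) := by
    intro j k hjk
    rw [Finset.disjoint_left]
    intro m hmj hmk
    have h1 := hBlt j m hmj
    have h2 := ((hBmem k m).mp hmk).2
    have h3 : Pk (j + 1) ≤ Pk k := hPmono hjk
    omega
  have hTdisj : ∀ j k, j ≠ k → Disjoint (T j) (T k) := by
    intro j k hjk
    rw [Finset.disjoint_left]
    rintro ⟨m, hm⟩ hj hk
    simp only [hTdef, Finset.mem_map, Finset.mem_attach, Function.Embedding.coeFn_mk,
      true_and] at hj hk
    obtain ⟨⟨a, ha⟩, haa⟩ := hj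
    obtain ⟨⟨b, hb⟩, hbb⟩ := hk
    have h1 : a = m := congrArg Subtype.val haa
    have h2 : b = m := congrArg Subtype.val hbb
    subst h1; subst h2
    rcases Nat.lt_or_ge j k with h | h
    · exact Finset.disjoint_left.mp (hBdisj j k h) ha hb
    · rcases Nat.lt_or_ge k j with h' | h'
      · exact Finset.disjoint_left.mp (hBdisj k j h') hb ha
      · exact hjk (le_antisymm h' h)
  -- final contradiction
  obtain ⟨K, hK⟩ := exists_nat_gt ((∑' x, f x) / (c / 2))
  have hUnion : ∀ K : ℕ, (K : ℝ) * (c / 2) ≤ ∑ x ∈ (Finset.range K).biUnion T, f x := by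
    intro K
    rw [Finset.sum_biUnion]
    · calc (K : ℝ) * (c / 2) = ∑ _k ∈ Finset.range K, (c / 2) := by
            rw [Finset.sum_const, Finset.card_range, nsmul_eq_mul]
        _ ≤ ∑ k ∈ Finset.range K, ∑ x ∈ T k, f x :=
            Finset.sum_le_sum (fun k _ => hTsum k)
    · intro j hj k hk hjk
      exact hTdisj j k hjk
  have hle : ∑ x ∈ (Finset.range K).biUnion T, f x ≤ ∑' x, f x :=
    Summable.sum_le_tsum _ (fun i _ => hf0 i) hS
  have h1 := (hUnion K).trans hle
  have hc2 : 0 < c / 2 := by linarith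
  have h2 := (div_lt_iff₀ hc2).mp hK
  linarith
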